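/- arXiv:2602.02200 — 2 statements merged into one kernel-verified Lean document; each statement's English description precedes it below -/
import Mathlib

section
/- For every k ≥ 1 and every m ∈ ℕ, the ℝ-vector space H_m(ℍ_k) of weighted homogeneous Δ_{H_k}-harmonic polynomials of degree m is finite-dimensional, and its dimension equals the binomial coefficient C(m + 2k − 1, 2k − 1). -/
open MvPolynomial

noncomputable section

/-- The polynomial ring ℝ[x₁,…,x_k,y₁,…,y_k,t]: variable `j` is `x_{j+1}` for `j < k`,
variable `k + j` is `y_{j+1}` for `j < k`, and variable `2k` is `t`. -/
abbrev Rk (k : ℕ) := MvPolynomial (Fin (2 * k + 1)) ℝ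

/-- Index of the variable x_j. -/
def xI (k : ℕ) (j : Fin k) : Fin (2 * k + 1) := ⟨(j : ℕ), by have := j.isLt; omega⟩

/-- Index of the variable y_j. -/
def yI (k : ℕ) (j : Fin k) : Fin (2 * k + 1) := ⟨k + (j : ℕ), by have := j.isLt; omega⟩

/-- Index of the variable t. -/
def tI (k : ℕ) : Fin (2 * k + 1) := ⟨2 * k, by omega⟩

/-- Weights: 1 on each x_j, y_j and 2 on t. -/
def wk (k : ℕ) : Fin (2 * k + 1) → ℤ := fun i => if (i : ℕ) = 2 * k then 2 else 1

/-- The horizontal vector field X_j p = ∂_{x_j} p + 2 y_j ∂ₜ p. -/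
def XopK (k : ℕ) (j : Fin k) : Rk k →ₗ[ℝ] Rk k :=
  (pderiv (xI k j)).toLinearMap +
    (LinearMap.mulLeft ℝ ((2 : Rk k) * X (yI k j))) ∘ₗ (pderiv (tI k)).toLinearMap

/-- The horizontal vector field Y_j p = ∂_{y_j} p − 2 x_j ∂ₜ p. -/
def YopK (k : ℕ) (j : Fin k) : Rk k →ₗ[ℝ] Rk k :=
  (pderiv (yI k j)).toLinearMap -
    (LinearMap.mulLeft ℝ ((2 : Rk k) * X (xI k j))) ∘ₗ (pderiv (tI k)).toLinearMap

/-- The sub-Laplacian Δ_{H_k} = Σ_j (X_j² + Y_j²). -/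
def ΔHk (k : ℕ) : Rk k →ₗ[ℝ] Rk k :=
  ∑ j : Fin k, (XopK k j ∘ₗ XopK k j + YopK k j ∘ₗ YopK k j)

/-- P_m(ℍ_k): weighted homogeneous polynomials of degree m (ℤ-indexed, so zero for m < 0). -/
def PmK (k : ℕ) (m : ℤ) : Submodule ℝ (Rk k) := weightedHomogeneousSubmodule ℝ (wk k) m

/-- H_m(ℍ_k): weighted homogeneous Δ_{H_k}-harmonic polynomials of degree m. -/
def HmK (k : ℕ) (m : ℤ) : Submodule ℝ (Rk k) := PmK k m ⊓ LinearMap.ker (ΔHk k)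

namespace Fischer

variable {N : ℕ}

/-- Fischer weight: product of factorials of the exponents. -/
def φ (d : Fin N →₀ ℕ) : ℝ := ∏ i : Fin N, (Nat.factorial (d i) : ℝ)

lemma φ_pos (d : Fin N →₀ ℕ) : 0 < φ d :=
  Finset.prod_pos fun i _ => by positivity

lemma φ_succ (d : Fin N →₀ ℕ) (i : Fin N) (h : d i ≠ 0) :
    φ d = (d i) * φ (d - Finsupp.single i 1) := by
  have h1 : ∀ j : Fin N, j ≠ i → (d - Finsupp.single i 1 : Fin N →₀ ℕ) j = d j := by
    intro j hj
    rw [Finsupp.tsub_apply, Finsupp.single_apply, if_neg (fun h' => hj h'.symm), Nat.sub_zero]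
  have h2 : (d - Finsupp.single i 1 : Fin N →₀ ℕ) i = d i - 1 := by
    rw [Finsupp.tsub_apply, Finsupp.single_apply, if_pos rfl]
  have h3 : ∏ j ∈ Finset.univ.erase i, ((((d - Finsupp.single i 1 : Fin N →₀ ℕ) j).factorial : ℝ)) =
      ∏ j ∈ Finset.univ.erase i, (((d j).factorial : ℝ)) :=
    Finset.prod_congr rfl (fun j hj => by rw [h1 j (Finset.mem_erase.mp hj).1])
  rw [φ, φ, ← Finset.prod_erase_mul _ _ (Finset.mem_univ i),
    ← Finset.prod_erase_mul _ _ (Finset.mem_univ i), h2, h3,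
    mul_comm ((d i : ℝ)) _, mul_assoc]
  congr 1
  norm_cast
  rw [mul_comm, Nat.mul_factorial_pred h]

/-- The Fischer bilinear pairing. -/
def B (p q : MvPolynomial (Fin N) ℝ) : ℝ :=
  ∑ d ∈ p.support, coeff d p * coeff d q * φ d

lemma B_eq_sum (p q : MvPolynomial (Fin N) ℝ) (s : Finset (Fin N →₀ ℕ))
    (hs : p.support ⊆ s) : B p q = ∑ d ∈ s, coeff d p * coeff d q * φ d := by
  rw [B]
  refine Finset.sum_subset hs (fun d _ hd => ?_)
  rw [notMem_support_iff.mp hd]; ring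

lemma B_add_left (p p' q : MvPolynomial (Fin N) ℝ) :
    B (p + p') q = B p q + B p' q := by
  classical
  set s := p.support ∪ p'.support with hs
  rw [B_eq_sum (p+p') q s (Finset.Subset.trans support_add (by rfl)),
      B_eq_sum p q s Finset.subset_union_left,
      B_eq_sum p' q s Finset.subset_union_right, ← Finset.sum_add_distrib]
  refine Finset.sum_congr rfl fun d _ => by rw [coeff_add]; ring

lemma B_zero_left (q : MvPolynomial (Fin N) ℝ) : B 0 q = 0 := by simp [B]

lemma B_smul_left (r : ℝ) (p q : MvPolynomial (Fin N) ℝ) :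
    B (r • p) q = r * B p q := by
  rw [B_eq_sum (r • p) q p.support (Finsupp.support_smul), B, Finset.mul_sum]
  refine Finset.sum_congr rfl fun d _ => by rw [coeff_smul, smul_eq_mul]; ring

lemma B_sum_left {ι : Type*} (s : Finset ι) (f : ι → MvPolynomial (Fin N) ℝ)
    (q : MvPolynomial (Fin N) ℝ) :
    B (∑ i ∈ s, f i) q = ∑ i ∈ s, B (f i) q := by
  classical
  induction s using Finset.induction_on with
  | empty => simp [B_zero_left]
  | @insert a s h ih => rw [Finset.sum_insert h, Finset.sum_insert h, B_add_left, ih]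

lemma B_monomial_left (a : Fin N →₀ ℕ) (c : ℝ) (q : MvPolynomial (Fin N) ℝ) :
    B (monomial a c) q = c * coeff a q * φ a := by
  by_cases hc : c = 0
  · simp [hc, B_zero_left]
  · rw [B, support_monomial, if_neg hc, Finset.sum_singleton, coeff_monomial, if_pos rfl]

lemma B_symm (p q : MvPolynomial (Fin N) ℝ) : B p q = B q p := by
  classical
  rw [B_eq_sum p q (p.support ∪ q.support) Finset.subset_union_left,
      B_eq_sum q p (p.support ∪ q.support) Finset.subset_union_right]
  exact Finset.sum_congr rfl fun d _ => by ring

lemma B_add_right (p q q' : MvPolynomial (Fin N) ℝ) :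
    B p (q + q') = B p q + B p q' := by
  rw [B_symm, B_add_left, B_symm q p, B_symm q' p]

lemma B_smul_right (r : ℝ) (p q : MvPolynomial (Fin N) ℝ) :
    B p (r • q) = r * B p q := by
  rw [B_symm, B_smul_left, B_symm]

lemma B_self_pos (p : MvPolynomial (Fin N) ℝ) (hp : p ≠ 0) : 0 < B p p := by
  have h : p.support.Nonempty := support_nonempty.mpr hp
  refine Finset.sum_pos' (fun d _ => ?_) ?_
  · have := φ_pos d; nlinarith [sq_nonneg (coeff d p)]
  · obtain ⟨d, hd⟩ := h
    have h1 : coeff d p ≠ 0 := mem_support_iff.mp hd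
    have h2 := φ_pos d
    exact ⟨d, hd, mul_pos (mul_self_pos.mpr h1) h2⟩

/-- Adjointness: `B (∂ᵢ p) q = B p (Xᵢ * q)`. -/
lemma B_pderiv_left (i : Fin N) (p q : MvPolynomial (Fin N) ℝ) :
    B (pderiv i p) q = B p (X i * q) := by
  induction p using MvPolynomial.induction_on' with
  | add p₁ p₂ h₁ h₂ => rw [map_add, B_add_left, B_add_left, h₁, h₂]
  | monomial a c =>
    rw [pderiv_monomial, B_monomial_left, B_monomial_left, coeff_X_mul']
    by_cases h : i ∈ a.support
    · have hne : a i ≠ 0 := Finsupp.mem_support_iff.mp h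
      rw [if_pos h, φ_succ a i hne]
      ring
    · have h0 : a i = 0 := not_not.mp (fun hh => h (Finsupp.mem_support_iff.mpr hh))
      rw [if_neg h, h0]
      simp

lemma B_X_mul_left (i : Fin N) (p q : MvPolynomial (Fin N) ℝ) :
    B (X i * p) q = B p (pderiv i q) := by
  rw [B_symm, ← B_pderiv_left, B_symm]



section WH

variable {N : ℕ} {w : Fin N → ℤ}

lemma weight_single_one (i : Fin N) :
    (Finsupp.weight w) (Finsupp.single i 1) = w i := by
  rw [Finsupp.weight_apply, Finsupp.sum_single_index (by simp), one_smul]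

lemma pderiv_mem_wh {p : MvPolynomial (Fin N) ℝ} {m : ℤ}
    (hp : p ∈ weightedHomogeneousSubmodule ℝ w m) (i : Fin N) :
    pderiv i p ∈ weightedHomogeneousSubmodule ℝ w (m - w i) := by
  classical
  rw [show p = ∑ d ∈ p.support, monomial d (coeff d p) from (support_sum_monomial_coeff p).symm,
    map_sum]
  refine Submodule.sum_mem _ fun d hd => ?_
  rw [pderiv_monomial]
  by_cases h : d i = 0
  · rw [h]; simp
  · have hw : (Finsupp.weight w) d = m := hp (mem_support_iff.mp hd)
    refine isWeightedHomogeneous_monomial _ _ _ ?_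
    have hle : Finsupp.single i 1 ≤ d := by
      rw [Finsupp.single_le_iff]; omega
    have : (d - Finsupp.single i 1) + Finsupp.single i 1 = d := tsub_add_cancel_of_le hle
    have h2 := congrArg (Finsupp.weight w) this
    rw [map_add, weight_single_one, hw] at h2
    omega

lemma X_mul_mem_wh {p : MvPolynomial (Fin N) ℝ} {m : ℤ}
    (hp : p ∈ weightedHomogeneousSubmodule ℝ w m) (i : Fin N) :
    X i * p ∈ weightedHomogeneousSubmodule ℝ w (m + w i) := by
  rw [add_comm]
  exact (isWeightedHomogeneous_X ℝ w i).mul hp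

lemma smul_nat_mul_mem_wh {p : MvPolynomial (Fin N) ℝ} {m : ℤ} (c : ℕ)
    (hp : p ∈ weightedHomogeneousSubmodule ℝ w m) :
    (c : MvPolynomial (Fin N) ℝ) * p ∈ weightedHomogeneousSubmodule ℝ w m := by
  have : (c : MvPolynomial (Fin N) ℝ) * p = (c : ℝ) • p := by
    rw [smul_eq_C_mul]; norm_num
  rw [this]
  exact Submodule.smul_mem _ _ hp

end WH

lemma B_sub_left {N : ℕ} (p p' q : MvPolynomial (Fin N) ℝ) :
    B (p - p') q = B p q - B p' q := by
  have := B_add_left (p - p') p' q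
  rw [sub_add_cancel] at this
  linarith

lemma B_sum_right {N : ℕ} {ι : Type*} (s : Finset ι) (f : ι → MvPolynomial (Fin N) ℝ)
    (p : MvPolynomial (Fin N) ℝ) :
    B p (∑ i ∈ s, f i) = ∑ i ∈ s, B p (f i) := by
  rw [B_symm, B_sum_left]
  exact Finset.sum_congr rfl fun i _ => B_symm _ _

end Fischer

open Fischer

/- ### index and weight facts -/

lemma xI_ne_tI (k : ℕ) (j : Fin k) : xI k j ≠ tI k := by
  have := j.isLt
  intro h
  have h2 : (j : ℕ) = 2 * k := congrArg Fin.val h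
  omega

lemma yI_ne_tI (k : ℕ) (j : Fin k) : yI k j ≠ tI k := by
  have := j.isLt
  intro h
  have h2 : k + (j : ℕ) = 2 * k := congrArg Fin.val h
  omega

lemma wk_xI (k : ℕ) (j : Fin k) : wk k (xI k j) = 1 := by
  have := j.isLt
  simp only [wk]
  rw [if_neg]; show ¬ (j : ℕ) = 2 * k; omega

lemma wk_yI (k : ℕ) (j : Fin k) : wk k (yI k j) = 1 := by
  have := j.isLt
  simp only [wk]
  rw [if_neg]; show ¬ k + (j : ℕ) = 2 * k; omega

lemma wk_tI (k : ℕ) : wk k (tI k) = 2 := by simp [wk, tI]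

/- ### adjoint operators -/

def SXop (k : ℕ) (j : Fin k) : Rk k →ₗ[ℝ] Rk k :=
  LinearMap.mulLeft ℝ (X (xI k j)) +
    (LinearMap.mulLeft ℝ ((2 : Rk k) * X (tI k))) ∘ₗ (pderiv (yI k j)).toLinearMap

def SYop (k : ℕ) (j : Fin k) : Rk k →ₗ[ℝ] Rk k :=
  LinearMap.mulLeft ℝ (X (yI k j)) -
    (LinearMap.mulLeft ℝ ((2 : Rk k) * X (tI k))) ∘ₗ (pderiv (xI k j)).toLinearMap

def Sop (k : ℕ) : Rk k →ₗ[ℝ] Rk k :=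
  ∑ j : Fin k, (SXop k j ∘ₗ SXop k j + SYop k j ∘ₗ SYop k j)

lemma two_mul_eq_smul {k : ℕ} (v : Rk k) : (2 : Rk k) * v = (2 : ℝ) • v := by
  rw [two_mul, two_smul]

lemma B_sub_right {N : ℕ} (p q q' : MvPolynomial (Fin N) ℝ) :
    B p (q - q') = B p q - B p q' := by
  rw [B_symm, B_sub_left, B_symm q p, B_symm q' p]

lemma B_Xop {k : ℕ} (j : Fin k) (p q : Rk k) :
    B (XopK k j p) q = B p (SXop k j q) := by
  simp only [XopK, SXop, LinearMap.add_apply, LinearMap.comp_apply, LinearMap.mulLeft_apply,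
    Derivation.coeFn_coe]
  rw [B_add_left, B_add_right, mul_assoc, mul_assoc, two_mul_eq_smul, two_mul_eq_smul,
    B_smul_left, B_smul_right, B_X_mul_left, B_pderiv_left, B_pderiv_left]

lemma B_Yop {k : ℕ} (j : Fin k) (p q : Rk k) :
    B (YopK k j p) q = B p (SYop k j q) := by
  simp only [YopK, SYop, LinearMap.sub_apply, LinearMap.comp_apply, LinearMap.mulLeft_apply,
    Derivation.coeFn_coe]
  rw [B_sub_left, B_sub_right, mul_assoc, mul_assoc, two_mul_eq_smul, two_mul_eq_smul,
    B_smul_left, B_smul_right, B_X_mul_left, B_pderiv_left, B_pderiv_left]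

lemma B_Delta {k : ℕ} (p q : Rk k) : B (ΔHk k p) q = B p (Sop k q) := by
  simp only [ΔHk, Sop, LinearMap.sum_apply, LinearMap.add_apply, LinearMap.comp_apply]
  rw [B_sum_left, B_sum_right]
  refine Finset.sum_congr rfl fun j _ => ?_
  rw [B_add_left, B_add_right, B_Xop, B_Xop, B_Yop, B_Yop]

/- ### weighted homogeneity of the operators -/

lemma Xop_mem {k : ℕ} {p : Rk k} {m : ℤ} (hp : p ∈ PmK k m) (j : Fin k) :
    XopK k j p ∈ PmK k (m - 1) := by
  simp only [PmK] at hp ⊢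
  simp only [XopK, LinearMap.add_apply, LinearMap.comp_apply, LinearMap.mulLeft_apply,
    Derivation.coeFn_coe]
  refine Submodule.add_mem _ ?_ ?_
  · have := pderiv_mem_wh hp (xI k j); rwa [wk_xI] at this
  · rw [mul_assoc, show (2 : Rk k) = ((2 : ℕ) : Rk k) by norm_num]
    refine smul_nat_mul_mem_wh 2 ?_
    have h1 := pderiv_mem_wh hp (tI k)
    rw [wk_tI] at h1
    have h2 := X_mul_mem_wh h1 (yI k j)
    rw [wk_yI] at h2
    have : m - 2 + 1 = m - 1 := by ring
    rwa [this] at h2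

lemma Yop_mem {k : ℕ} {p : Rk k} {m : ℤ} (hp : p ∈ PmK k m) (j : Fin k) :
    YopK k j p ∈ PmK k (m - 1) := by
  simp only [PmK] at hp ⊢
  simp only [YopK, LinearMap.sub_apply, LinearMap.comp_apply, LinearMap.mulLeft_apply,
    Derivation.coeFn_coe]
  refine Submodule.sub_mem _ ?_ ?_
  · have := pderiv_mem_wh hp (yI k j); rwa [wk_yI] at this
  · rw [mul_assoc, show (2 : Rk k) = ((2 : ℕ) : Rk k) by norm_num]
    refine smul_nat_mul_mem_wh 2 ?_
    have h1 := pderiv_mem_wh hp (tI k)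
    rw [wk_tI] at h1
    have h2 := X_mul_mem_wh h1 (xI k j)
    rw [wk_xI] at h2
    have : m - 2 + 1 = m - 1 := by ring
    rwa [this] at h2

lemma SXop_mem {k : ℕ} {p : Rk k} {m : ℤ} (hp : p ∈ PmK k m) (j : Fin k) :
    SXop k j p ∈ PmK k (m + 1) := by
  simp only [PmK] at hp ⊢
  simp only [SXop, LinearMap.add_apply, LinearMap.comp_apply, LinearMap.mulLeft_apply,
    Derivation.coeFn_coe]
  refine Submodule.add_mem _ ?_ ?_
  · have := X_mul_mem_wh hp (xI k j); rwa [wk_xI] at this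
  · rw [mul_assoc, show (2 : Rk k) = ((2 : ℕ) : Rk k) by norm_num]
    refine smul_nat_mul_mem_wh 2 ?_
    have h1 := pderiv_mem_wh hp (yI k j)
    rw [wk_yI] at h1
    have h2 := X_mul_mem_wh h1 (tI k)
    rw [wk_tI] at h2
    have : m - 1 + 2 = m + 1 := by ring
    rwa [this] at h2

lemma SYop_mem {k : ℕ} {p : Rk k} {m : ℤ} (hp : p ∈ PmK k m) (j : Fin k) :
    SYop k j p ∈ PmK k (m + 1) := by
  simp only [PmK] at hp ⊢
  simp only [SYop, LinearMap.sub_apply, LinearMap.comp_apply, LinearMap.mulLeft_apply,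
    Derivation.coeFn_coe]
  refine Submodule.sub_mem _ ?_ ?_
  · have := X_mul_mem_wh hp (yI k j); rwa [wk_yI] at this
  · rw [mul_assoc, show (2 : Rk k) = ((2 : ℕ) : Rk k) by norm_num]
    refine smul_nat_mul_mem_wh 2 ?_
    have h1 := pderiv_mem_wh hp (xI k j)
    rw [wk_xI] at h1
    have h2 := X_mul_mem_wh h1 (tI k)
    rw [wk_tI] at h2
    have : m - 1 + 2 = m + 1 := by ring
    rwa [this] at h2

lemma Delta_mem {k : ℕ} {p : Rk k} {m : ℤ} (hp : p ∈ PmK k m) :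
    ΔHk k p ∈ PmK k (m - 2) := by
  simp only [ΔHk, LinearMap.sum_apply, LinearMap.add_apply, LinearMap.comp_apply]
  refine Submodule.sum_mem _ fun j _ => Submodule.add_mem _ ?_ ?_
  · have := Xop_mem (Xop_mem hp j) j
    rwa [show m - 1 - 1 = m - 2 by ring] at this
  · have := Yop_mem (Yop_mem hp j) j
    rwa [show m - 1 - 1 = m - 2 by ring] at this

lemma Sop_mem {k : ℕ} {p : Rk k} {m : ℤ} (hp : p ∈ PmK k m) :
    Sop k p ∈ PmK k (m + 2) := by
  simp only [Sop, LinearMap.sum_apply, LinearMap.add_apply, LinearMap.comp_apply]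
  refine Submodule.sum_mem _ fun j _ => Submodule.add_mem _ ?_ ?_
  · have := SXop_mem (SXop_mem hp j) j
    rwa [show m + 1 + 1 = m + 2 by ring] at this
  · have := SYop_mem (SYop_mem hp j) j
    rwa [show m + 1 + 1 = m + 2 by ring] at this

/- ### the evaluation t ↦ 0 and injectivity of Sop -/

def εt (k : ℕ) : Rk k →ₐ[ℝ] Rk k := aeval (fun i => if i = tI k then 0 else X i)

lemma εt_X_tI (k : ℕ) : εt k (X (tI k)) = 0 := by simp [εt]

lemma εt_SXop {k : ℕ} (j : Fin k) (u : Rk k) :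
    εt k (SXop k j u) = X (xI k j) * εt k u := by
  have hx : εt k (X (xI k j)) = X (xI k j) := by simp [εt, xI_ne_tI k j]
  simp only [SXop, LinearMap.add_apply, LinearMap.comp_apply, LinearMap.mulLeft_apply,
    Derivation.coeFn_coe]
  rw [map_add, map_mul, map_mul, map_mul, εt_X_tI, mul_zero, zero_mul, add_zero, hx]

lemma εt_SYop {k : ℕ} (j : Fin k) (u : Rk k) :
    εt k (SYop k j u) = X (yI k j) * εt k u := by
  have hy : εt k (X (yI k j)) = X (yI k j) := by simp [εt, yI_ne_tI k j]
  simp only [SYop, LinearMap.sub_apply, LinearMap.comp_apply, LinearMap.mulLeft_apply,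
    Derivation.coeFn_coe]
  rw [map_sub, map_mul, map_mul, map_mul, εt_X_tI, mul_zero, zero_mul, sub_zero, hy]

def ρpol (k : ℕ) : Rk k := ∑ j : Fin k, (X (xI k j) ^ 2 + X (yI k j) ^ 2)

lemma εt_Sop {k : ℕ} (q : Rk k) : εt k (Sop k q) = ρpol k * εt k q := by
  simp only [Sop, LinearMap.sum_apply, LinearMap.add_apply, LinearMap.comp_apply, map_sum,
    map_add, ρpol, Finset.sum_mul]
  refine Finset.sum_congr rfl fun j _ => ?_
  rw [εt_SXop, εt_SXop, εt_SYop, εt_SYop, add_mul]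
  ring

lemma ρpol_ne_zero {k : ℕ} (hk : 1 ≤ k) : ρpol k ≠ 0 := by
  intro h
  have h2 := congrArg (eval (fun _ => (1 : ℝ))) h
  simp only [ρpol, map_sum, map_add, map_pow, eval_X, map_zero, one_pow] at h2
  rw [Finset.sum_const, Finset.card_univ, Fintype.card_fin] at h2
  norm_num at h2
  omega

lemma εt_monomial {k : ℕ} (e : Fin (2*k+1) →₀ ℕ) (c : ℝ) :
    εt k (monomial e c) = if e (tI k) = 0 then monomial e c else 0 := by
  rw [show (monomial e c : Rk k) = C c * (e.prod fun i n => X i ^ n) from monomial_eq, map_mul]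
  by_cases h : e (tI k) = 0
  · rw [if_pos h]
    have : εt k (e.prod fun i n => X i ^ n) = e.prod fun i n => X i ^ n := by
      rw [Finsupp.prod, map_prod]
      refine Finset.prod_congr rfl fun i hi => ?_
      have hi' : i ≠ tI k := fun hh => (Finsupp.mem_support_iff.mp hi) (hh ▸ h)
      rw [map_pow]
      simp [εt, hi']
    have hC : εt k (C c) = C c := by simp [εt]
    rw [hC, this, ← monomial_eq]
  · rw [if_neg h]
    have : εt k (e.prod fun i n => X i ^ n) = 0 := by
      rw [Finsupp.prod, map_prod]
      refine Finset.prod_eq_zero (Finsupp.mem_support_iff.mpr h) ?_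
      rw [map_pow]
      simp only [εt, aeval_X, if_pos rfl]
      exact zero_pow h
    rw [this, mul_zero]

lemma dvd_of_εt_eq_zero {k : ℕ} {q : Rk k} (h : εt k q = 0) :
    ∃ q', q = X (tI k) * q' := by
  rsuffices ⟨q', hq⟩ : X (tI k) ∣ q
  · exact ⟨q', hq⟩
  have hsupp : ∀ d ∈ q.support, d (tI k) ≠ 0 := by
    intro d hd h0
    have hc : coeff d (εt k q) = coeff d q := by
      conv_lhs => rw [show q = ∑ e ∈ q.support, monomial e (coeff e q) from
        (support_sum_monomial_coeff q).symm]
      rw [map_sum]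
      rw [coeff_sum]
      rw [Finset.sum_eq_single d]
      · rw [εt_monomial, if_pos h0, coeff_monomial, if_pos rfl]
      · intro e he hne
        rw [εt_monomial]
        by_cases h1 : e (tI k) = 0
        · rw [if_pos h1, coeff_monomial, if_neg hne]
        · rw [if_neg h1, coeff_zero]
      · intro hdn
        exact absurd hd hdn
    rw [h, coeff_zero] at hc
    exact mem_support_iff.mp hd hc.symm
  conv_lhs => skip
  rw [show q = ∑ e ∈ q.support, monomial e (coeff e q) from (support_sum_monomial_coeff q).symm]
  refine Finset.dvd_sum fun e he => ?_
  exact X_dvd_monomial.mpr (Or.inr (hsupp e he))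

lemma SXop_tmul {k : ℕ} (j : Fin k) (u : Rk k) :
    SXop k j (X (tI k) * u) = X (tI k) * SXop k j u := by
  simp only [SXop, LinearMap.add_apply, LinearMap.comp_apply, LinearMap.mulLeft_apply,
    Derivation.coeFn_coe]
  rw [pderiv_mul, pderiv_X_of_ne (show tI k ≠ yI k j from (yI_ne_tI k j).symm)]
  ring

lemma SYop_tmul {k : ℕ} (j : Fin k) (u : Rk k) :
    SYop k j (X (tI k) * u) = X (tI k) * SYop k j u := by
  simp only [SYop, LinearMap.sub_apply, LinearMap.comp_apply, LinearMap.mulLeft_apply,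
    Derivation.coeFn_coe]
  rw [pderiv_mul, pderiv_X_of_ne (show tI k ≠ xI k j from (xI_ne_tI k j).symm)]
  ring

lemma Sop_tmul {k : ℕ} (u : Rk k) : Sop k (X (tI k) * u) = X (tI k) * Sop k u := by
  simp only [Sop, LinearMap.sum_apply, LinearMap.add_apply, LinearMap.comp_apply]
  rw [Finset.mul_sum]
  refine Finset.sum_congr rfl fun j _ => ?_
  rw [SXop_tmul, SXop_tmul, SYop_tmul, SYop_tmul, mul_add]

lemma Sop_inj {k : ℕ} (hk : 1 ≤ k) {q : Rk k} (h : Sop k q = 0) : q = 0 := by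
  suffices H : ∀ n (q : Rk k), degreeOf (tI k) q ≤ n → Sop k q = 0 → q = 0 from
    H (degreeOf (tI k) q) q le_rfl h
  intro n
  induction n with
  | zero =>
      intro q hdeg hS
      have hε : εt k q = 0 := by
        have h2 := congrArg (εt k) hS
        rw [εt_Sop, map_zero] at h2
        rcases mul_eq_zero.mp h2 with h1 | h1
        · exact absurd h1 (ρpol_ne_zero hk)
        · exact h1
      obtain ⟨q', rfl⟩ := dvd_of_εt_eq_zero hε
      by_cases hq' : q' = 0
      · rw [hq', mul_zero]
      · exfalso
        have hd := (degreeOf_mul_X_eq_degreeOf_add_one_iff (tI k) q').mpr hq'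
        rw [mul_comm (X (tI k)) q'] at hdeg
        omega
  | succ n ih =>
      intro q hdeg hS
      have hε : εt k q = 0 := by
        have h2 := congrArg (εt k) hS
        rw [εt_Sop, map_zero] at h2
        rcases mul_eq_zero.mp h2 with h1 | h1
        · exact absurd h1 (ρpol_ne_zero hk)
        · exact h1
      obtain ⟨q', rfl⟩ := dvd_of_εt_eq_zero hε
      by_cases hq' : q' = 0
      · rw [hq', mul_zero]
      · have hd := (degreeOf_mul_X_eq_degreeOf_add_one_iff (tI k) q').mpr hq'
        rw [mul_comm (X (tI k)) q'] at hdeg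
        have hS' : Sop k q' = 0 := by
          rw [Sop_tmul] at hS
          rcases mul_eq_zero.mp hS with h1 | h1
          · exact absurd h1 (X_ne_zero _)
          · exact h1
        rw [ih q' (by omega) hS', mul_zero]

/- ### counting monomials -/

def WS (k : ℕ) (m : ℤ) : Set (Fin (2*k+1) →₀ ℕ) := {d | Finsupp.weight (wk k) d = m}

lemma weight_wk_eq (k : ℕ) (d : Fin (2*k+1) →₀ ℕ) :
    Finsupp.weight (wk k) d = ∑ i : Fin (2*k+1), (d i : ℤ) * wk k i := by
  rw [Finsupp.weight_apply, Finsupp.sum_fintype]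
  · exact Finset.sum_congr rfl fun i _ => by rw [nsmul_eq_mul]
  · intro i; rw [zero_smul]

lemma wk_ge_one (k : ℕ) (i : Fin (2*k+1)) : 1 ≤ wk k i := by
  simp only [wk]; split <;> omega

lemma coord_le_of_weight {k : ℕ} {m : ℤ} {d : Fin (2*k+1) →₀ ℕ}
    (h : Finsupp.weight (wk k) d = m) (i : Fin (2*k+1)) : (d i : ℤ) ≤ m ∧ 0 ≤ m := by
  rw [weight_wk_eq] at h
  have h1 : ∀ j : Fin (2*k+1), j ∈ Finset.univ → (0:ℤ) ≤ (d j : ℤ) * wk k j :=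
    fun j _ => mul_nonneg (by positivity) (by linarith [wk_ge_one k j])
  have h2 : (d i : ℤ) * wk k i ≤ m := h ▸ Finset.single_le_sum h1 (Finset.mem_univ i)
  have h3 : (d i : ℤ) ≤ (d i : ℤ) * wk k i := le_mul_of_one_le_right (by positivity) (wk_ge_one k i)
  have h4 : (0:ℤ) ≤ m := h ▸ Finset.sum_nonneg h1
  exact ⟨le_trans h3 h2, h4⟩

instance WS_finite (k : ℕ) (m : ℤ) : Finite (WS k m) := by
  refine Finite.of_injective
    (fun d => (fun i => (⟨d.1 i, ?_⟩ : Fin (m.toNat + 1)) : Fin (2*k+1) → Fin (m.toNat+1))) ?_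
  · obtain ⟨h1, h2⟩ := coord_le_of_weight d.2 i
    omega
  · intro d e h
    ext i
    exact congrArg Fin.val (congrFun h i)

lemma WS_empty {k : ℕ} {m : ℤ} (hm : m < 0) : IsEmpty (WS k m) := by
  refine ⟨fun d => ?_⟩
  have := (coord_le_of_weight d.2 ⟨0, by omega⟩).2
  omega

lemma finrank_PmK (k : ℕ) (m : ℤ) :
    FiniteDimensional ℝ (PmK k m) ∧
      Module.finrank ℝ (PmK k m) = Nat.card (WS k m) := by
  have heq : PmK k m = AddMonoidAlgebra.supported ℝ ℝ (WS k m) := by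
    rw [PmK, weightedHomogeneousSubmodule_eq_finsupp_supported]
    rfl
  haveI : Fintype (WS k m) := Fintype.ofFinite _
  let e : (PmK k m) ≃ₗ[ℝ] (WS k m → ℝ) :=
    (LinearEquiv.ofEq _ _ heq).trans
      ((AddMonoidAlgebra.supportedEquivFinsupp (WS k m)).trans
        (Finsupp.linearEquivFunOnFinite ℝ ℝ (WS k m)))
  constructor
  · exact Module.Finite.equiv e.symm
  · rw [e.finrank_eq, Module.finrank_fintype_fun_eq_card, Nat.card_eq_fintype_card]

lemma tI_eq_last (k : ℕ) : tI k = Fin.last (2*k) := rfl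

lemma wk_castSucc (k : ℕ) (i : Fin (2*k)) : wk k (Fin.castSucc i) = 1 := by
  have := i.isLt
  simp only [wk, Fin.coe_castSucc]
  rw [if_neg]; omega

lemma card_WS_rec (k : ℕ) (m : ℕ) :
    Nat.card (WS k (m : ℤ)) =
      Nat.card (WS k ((m : ℤ) - 2)) + Nat.multichoose (2*k) m := by
  classical
  -- split according to the t-exponent
  have E0 : WS k (m : ℤ) ≃ {d : WS k (m : ℤ) // d.1 (tI k) = 0} ⊕
      {d : WS k (m : ℤ) // ¬ d.1 (tI k) = 0} := (Equiv.sumCompl _).symm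
  -- positive t-exponent: divide by t
  have E1 : {d : WS k (m : ℤ) // ¬ d.1 (tI k) = 0} ≃ WS k ((m : ℤ) - 2) := by
    refine ⟨fun d => ⟨d.1.1 - Finsupp.single (tI k) 1, ?_⟩,
      fun e => ⟨⟨e.1 + Finsupp.single (tI k) 1, ?_⟩, ?_⟩, fun d => ?_, fun e => ?_⟩
    · have hle : Finsupp.single (tI k) 1 ≤ d.1.1 := by
        rw [Finsupp.single_le_iff]
        have := d.2; omega
      have hadd : (d.1.1 - Finsupp.single (tI k) 1) + Finsupp.single (tI k) 1 = d.1.1 :=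
        tsub_add_cancel_of_le hle
      have h2 := congrArg (Finsupp.weight (wk k)) hadd
      rw [map_add, Fischer.weight_single_one, wk_tI] at h2
      have h3 : Finsupp.weight (wk k) d.1.1 = (m : ℤ) := d.1.2
      show Finsupp.weight (wk k) _ = _
      omega
    · show Finsupp.weight (wk k) _ = _
      rw [map_add, Fischer.weight_single_one, wk_tI]
      have h3 : Finsupp.weight (wk k) e.1 = (m : ℤ) - 2 := e.2
      omega
    · show ¬ (e.1 + Finsupp.single (tI k) 1 : Fin (2*k+1) →₀ ℕ) (tI k) = 0
      rw [Finsupp.add_apply, Finsupp.single_apply, if_pos rfl]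
      omega
    · refine Subtype.ext (Subtype.ext ?_)
      show (d.1.1 - Finsupp.single (tI k) 1) + Finsupp.single (tI k) 1 = d.1.1
      refine tsub_add_cancel_of_le ?_
      rw [Finsupp.single_le_iff]
      have := d.2; omega
    · refine Subtype.ext ?_
      show (e.1 + Finsupp.single (tI k) 1) - Finsupp.single (tI k) 1 = e.1
      exact add_tsub_cancel_right _ _
  -- zero t-exponent: polynomials in x, y only
  have E2 : {d : WS k (m : ℤ) // d.1 (tI k) = 0} ≃ {g : Fin (2*k) → ℕ // ∑ i, g i = m} := by
    have weq : ∀ d : Fin (2*k+1) →₀ ℕ, d (tI k) = 0 →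
        Finsupp.weight (wk k) d = ∑ i : Fin (2*k), (d (Fin.castSucc i) : ℤ) := by
      intro d hd
      rw [weight_wk_eq, Fin.sum_univ_castSucc, ← tI_eq_last, hd]
      simp only [Nat.cast_zero, zero_mul, add_zero]
      exact Finset.sum_congr rfl fun i _ => by rw [wk_castSucc, mul_one]
    refine ⟨fun d => ⟨fun i => d.1.1 (Fin.castSucc i), ?_⟩,
      fun g => ⟨⟨Finsupp.equivFunOnFinite.symm (Fin.snoc g.1 0), ?_⟩, ?_⟩, fun d => ?_, fun g => ?_⟩
    · have h1 : Finsupp.weight (wk k) d.1.1 = (m : ℤ) := d.1.2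
      rw [weq d.1.1 d.2] at h1
      have : ((∑ i : Fin (2*k), d.1.1 (Fin.castSucc i) : ℕ) : ℤ) = (m : ℤ) := by
        push_cast
        exact h1
      exact_mod_cast this
    · show Finsupp.weight (wk k) _ = _
      rw [weq]
      · have : ∀ i : Fin (2*k),
            (Finsupp.equivFunOnFinite.symm (Fin.snoc g.1 0) : Fin (2*k+1) →₀ ℕ) (Fin.castSucc i)
              = g.1 i := by
          intro i
          simp [Fin.snoc_castSucc]
        rw [Finset.sum_congr rfl fun i _ => by rw [this i]]
        rw [← Nat.cast_sum, g.2]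
      · show (Finsupp.equivFunOnFinite.symm (Fin.snoc g.1 0) : Fin (2*k+1) →₀ ℕ) (tI k) = 0
        rw [tI_eq_last]
        simp [Fin.snoc_last]
    · show (Finsupp.equivFunOnFinite.symm (Fin.snoc g.1 0) : Fin (2*k+1) →₀ ℕ) (tI k) = 0
      rw [tI_eq_last]
      simp [Fin.snoc_last]
    · refine Subtype.ext (Subtype.ext ?_)
      ext i
      show (Finsupp.equivFunOnFinite.symm (Fin.snoc (fun i => d.1.1 (Fin.castSucc i)) 0)
        : Fin (2*k+1) →₀ ℕ) i = d.1.1 i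
      induction i using Fin.lastCases with
      | last => simpa [tI_eq_last] using d.2.symm
      | cast i => simp [Fin.snoc_castSucc]
    · refine Subtype.ext ?_
      funext i
      show (Finsupp.equivFunOnFinite.symm (Fin.snoc g.1 0) : Fin (2*k+1) →₀ ℕ) (Fin.castSucc i)
        = g.1 i
      simp [Fin.snoc_castSucc]
  have E3 : {g : Fin (2*k) → ℕ // ∑ i, g i = m} ≃ Sym (Fin (2*k)) m :=
    (Sym.equivNatSumOfFintype (Fin (2*k)) m).symm
  rw [Nat.card_congr E0, Nat.card_sum, Nat.card_congr E1, Nat.card_congr (E2.trans E3),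
    Nat.card_eq_fintype_card, Sym.card_sym_eq_multichoose, Fintype.card_fin, add_comm]

/- ### main theorem -/

set_option synthInstance.maxHeartbeats 1000000 in
set_option maxHeartbeats 2000000 in
/-- `dim H_m(ℍ_k) = C(m + 2k − 1, 2k − 1)`. -/
theorem stmt3 (k : ℕ) (hk : 1 ≤ k) (m : ℕ) :
    FiniteDimensional ℝ (HmK k (m : ℤ)) ∧
    Module.finrank ℝ (HmK k (m : ℤ)) = Nat.choose (m + 2 * k - 1) (2 * k - 1) := by
  obtain ⟨fd1, hr1⟩ := finrank_PmK k (m : ℤ)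
  obtain ⟨fd2, hr2⟩ := finrank_PmK k ((m : ℤ) - 2)
  -- the restricted operators
  set L : PmK k (m : ℤ) →ₗ[ℝ] PmK k ((m : ℤ) - 2) :=
    (ΔHk k).restrict (fun p hp => Delta_mem hp) with hL
  set G : PmK k ((m : ℤ) - 2) →ₗ[ℝ] PmK k (m : ℤ) :=
    (Sop k).restrict (fun p hp => by
      have := Sop_mem hp
      rwa [show (m : ℤ) - 2 + 2 = m by ring] at this) with hG
  -- L ∘ G is injective
  have hinj : Function.Injective (L ∘ₗ G) := by
    rw [← LinearMap.ker_eq_bot, LinearMap.ker_eq_bot']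
    intro q hq
    have h0 : ΔHk k (Sop k (q : Rk k)) = 0 := by
      have := congrArg (Subtype.val) hq
      simpa [hL, hG, LinearMap.restrict_apply] using this
    have hB : Fischer.B (Sop k (q : Rk k)) (Sop k (q : Rk k)) = 0 := by
      rw [← B_Delta, h0, Fischer.B_zero_left]
    have hS0 : Sop k (q : Rk k) = 0 := by
      by_contra hne
      exact absurd hB (ne_of_gt (Fischer.B_self_pos _ hne))
    have hq0 : (q : Rk k) = 0 := Sop_inj hk hS0
    exact Subtype.ext hq0
  have hsurjLG : Function.Surjective (L ∘ₗ G) :=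
    LinearMap.injective_iff_surjective.mp hinj
  have hsurjL : Function.Surjective L := by
    intro z
    obtain ⟨q, hq⟩ := hsurjLG z
    exact ⟨G q, hq⟩
  -- identify the kernel of L with HmK
  have hkereq : LinearMap.ker L = Submodule.comap (PmK k (m : ℤ)).subtype (HmK k (m : ℤ)) := by
    rw [hL, LinearMap.ker_restrict, HmK, Submodule.comap_inf, Submodule.comap_subtype_self,
      top_inf_eq]
  have hle : HmK k (m : ℤ) ≤ PmK k (m : ℤ) := by rw [HmK]; exact inf_le_left
  let E1 : (LinearMap.ker L) ≃ₗ[ℝ]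
      Submodule.comap (PmK k (m : ℤ)).subtype (HmK k (m : ℤ)) := LinearEquiv.ofEq _ _ hkereq
  let E2 : Submodule.comap (PmK k (m : ℤ)).subtype (HmK k (m : ℤ)) ≃ₗ[ℝ] HmK k (m : ℤ) :=
    Submodule.comapSubtypeEquivOfLe hle
  let E : (LinearMap.ker L) ≃ₗ[ℝ] HmK k (m : ℤ) := E1.trans E2
  haveI fdH : FiniteDimensional ℝ (HmK k (m : ℤ)) := Module.Finite.equiv E
  refine ⟨fdH, ?_⟩
  -- rank-nullity
  have hrn := LinearMap.finrank_range_add_finrank_ker L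
  rw [LinearMap.range_eq_top.mpr hsurjL, finrank_top] at hrn
  have hEr : Module.finrank ℝ (HmK k (m : ℤ)) = Module.finrank ℝ (LinearMap.ker L) :=
    E.finrank_eq.symm
  have hcard := card_WS_rec k m
  have hmc : Nat.multichoose (2*k) m = (m + 2*k - 1).choose (2*k - 1) := by
    rw [Nat.multichoose_eq]
    have h1 : 2*k + m - 1 = m + 2*k - 1 := by omega
    rw [h1]
    have h2 : m ≤ m + 2*k - 1 := by omega
    have := Nat.choose_symm h2
    rw [show m + 2*k - 1 - m = 2*k - 1 by omega] at this
    omega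
  omega

end
end

section
/- For every k ≥ 1 and every m ≥ 2, the sub-Laplacian restricts to a surjective ℝ-linear map Δ_{H_k} : P_m(ℍ_k) → P_{m−2}(ℍ_k); consequently dim H_m(ℍ_k) = dim P_m(ℍ_k) − dim P_{m−2}(ℍ_k). -/
open MvPolynomial

noncomputable section

namespace Stmt5Aux

variable {k : ℕ}

/-! ### The Fischer pairing -/

/-- factorial weight of a multi-index -/
def facR (d : Fin (2 * k + 1) →₀ ℕ) : ℝ := ∏ i, (Nat.factorial (d i) : ℝ)

lemma facR_pos (d : Fin (2 * k + 1) →₀ ℕ) : 0 < facR d := by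
  apply Finset.prod_pos
  intro i _
  exact_mod_cast Nat.factorial_pos _

lemma facR_add_single (d : Fin (2 * k + 1) →₀ ℕ) (i : Fin (2 * k + 1)) :
    facR (d + Finsupp.single i 1) = ((d i : ℝ) + 1) * facR d := by
  unfold facR
  rw [← Finset.mul_prod_erase _ _ (Finset.mem_univ i),
      ← Finset.mul_prod_erase _ (fun j => ((d j).factorial : ℝ)) (Finset.mem_univ i)]
  have h1 : ∀ j ∈ Finset.univ.erase i,
      ((((d + Finsupp.single i 1) : Fin (2 * k + 1) →₀ ℕ) j).factorial : ℝ)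
        = ((d j).factorial : ℝ) := by
    intro j hj
    have hji : j ≠ i := (Finset.mem_erase.mp hj).1
    rw [Finsupp.add_apply, Finsupp.single_apply, if_neg (Ne.symm hji), add_zero]
  rw [Finset.prod_congr rfl h1]
  have h2 : ((d + Finsupp.single i 1 : Fin (2 * k + 1) →₀ ℕ)) i = d i + 1 := by
    rw [Finsupp.add_apply, Finsupp.single_apply, if_pos rfl]
  rw [h2, Nat.factorial_succ]
  push_cast
  ring

/-- Fischer-type bilinear pairing -/
def Bf (p q : Rk k) : ℝ := ∑ d ∈ q.support, coeff d p * coeff d q * facR d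

lemma Bf_eq_superset {p q : Rk k} {S : Finset (Fin (2 * k + 1) →₀ ℕ)} (hS : q.support ⊆ S) :
    Bf p q = ∑ d ∈ S, coeff d p * coeff d q * facR d := by
  apply Finset.sum_subset hS
  intro d _ hd
  rw [notMem_support_iff.mp hd]
  ring

lemma Bf_symm (p q : Rk k) : Bf p q = Bf q p := by
  rw [Bf_eq_superset (S := p.support ∪ q.support) Finset.subset_union_right,
      Bf_eq_superset (S := p.support ∪ q.support) Finset.subset_union_left]
  exact Finset.sum_congr rfl fun d _ => by ring

lemma Bf_add_left (p p' q : Rk k) : Bf (p + p') q = Bf p q + Bf p' q := by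
  unfold Bf
  rw [← Finset.sum_add_distrib]
  exact Finset.sum_congr rfl fun d _ => by rw [coeff_add]; ring

lemma Bf_add_right (p q q' : Rk k) : Bf p (q + q') = Bf p q + Bf p q' := by
  rw [Bf_symm, Bf_add_left, Bf_symm q p, Bf_symm q' p]

lemma Bf_zero_left (q : Rk k) : Bf 0 q = 0 := by
  unfold Bf; apply Finset.sum_eq_zero; intro d _; simp

lemma Bf_sum_left {ι : Type*} (s : Finset ι) (f : ι → Rk k) (q : Rk k) :
    Bf (∑ j ∈ s, f j) q = ∑ j ∈ s, Bf (f j) q := by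
  classical
  induction s using Finset.induction_on with
  | empty => simp [Bf_zero_left]
  | insert _ _ h ih => rw [Finset.sum_insert h, Finset.sum_insert h, Bf_add_left, ih]

lemma Bf_sum_right {ι : Type*} (s : Finset ι) (f : ι → Rk k) (p : Rk k) :
    Bf p (∑ j ∈ s, f j) = ∑ j ∈ s, Bf p (f j) := by
  rw [Bf_symm, Bf_sum_left]
  exact Finset.sum_congr rfl fun j _ => Bf_symm _ _

lemma Bf_C_mul_left (c : ℝ) (p q : Rk k) : Bf (C c * p) q = c * Bf p q := by
  unfold Bf
  rw [Finset.mul_sum]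
  exact Finset.sum_congr rfl fun d _ => by rw [coeff_C_mul]; ring

lemma Bf_C_mul_right (c : ℝ) (p q : Rk k) : Bf p (C c * q) = c * Bf p q := by
  rw [Bf_symm, Bf_C_mul_left, Bf_symm]

lemma Bf_neg_left (p q : Rk k) : Bf (-p) q = - Bf p q := by
  have h := Bf_C_mul_left (k := k) (-1) p q
  rw [map_neg, map_one] at h
  rw [neg_one_mul, neg_mul] at h
  simpa using h

lemma Bf_sub_left (p p' q : Rk k) : Bf (p - p') q = Bf p q - Bf p' q := by
  rw [sub_eq_add_neg, Bf_add_left, Bf_neg_left]; ring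

lemma Bf_sub_right (p q q' : Rk k) : Bf p (q - q') = Bf p q - Bf p q' := by
  rw [Bf_symm, Bf_sub_left, Bf_symm q p, Bf_symm q' p]

lemma Bf_monomial_right (p : Rk k) (v : Fin (2 * k + 1) →₀ ℕ) (b : ℝ) :
    Bf p (monomial v b) = coeff v p * b * facR v := by
  rcases eq_or_ne b 0 with rfl | hb
  · rw [map_zero]
    unfold Bf
    simp
  · unfold Bf
    rw [support_monomial, if_neg hb, Finset.sum_singleton, coeff_monomial, if_pos rfl]

lemma Bf_self_pos {q : Rk k} (hq : q ≠ 0) : 0 < Bf q q := by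
  unfold Bf
  apply Finset.sum_pos
  · intro d hd
    have h := mem_support_iff.mp hd
    exact mul_pos (mul_self_pos.mpr h) (facR_pos d)
  · exact support_nonempty.mpr hq

lemma Bf_self_eq_zero {q : Rk k} (hq : Bf q q = 0) : q = 0 := by
  by_contra h
  exact (Bf_self_pos h).ne' hq

/-! ### coeff of pderiv, and the key adjunction -/

lemma coeff_pderiv (i : Fin (2 * k + 1)) (v : Fin (2 * k + 1) →₀ ℕ) (p : Rk k) :
    coeff v (pderiv i p) = ((v i : ℝ) + 1) * coeff (v + Finsupp.single i 1) p := by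
  induction p using MvPolynomial.induction_on' with
  | add p q hp hq => rw [map_add, coeff_add, coeff_add, hp, hq]; ring
  | monomial u a =>
    rw [pderiv_monomial, coeff_monomial, coeff_monomial]
    by_cases h : u = v + Finsupp.single i 1
    · subst h
      have h1 : (v + Finsupp.single i 1) - Finsupp.single i 1 = v :=
        add_tsub_cancel_right _ _
      rw [if_pos h1, if_pos rfl]
      have h2 : ((v + Finsupp.single i 1 : Fin (2 * k + 1) →₀ ℕ)) i = v i + 1 := by
        rw [Finsupp.add_apply, Finsupp.single_apply, if_pos rfl]
      rw [h2]
      push_cast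
      ring
    · rw [if_neg h]
      by_cases h2 : u - Finsupp.single i 1 = v
      · by_cases h3 : u i = 0
        · rw [if_pos h2, h3]
          push_cast
          ring
        · exfalso
          apply h
          have hle : Finsupp.single i 1 ≤ u := by
            rw [Finsupp.single_le_iff]
            omega
          rw [← h2, tsub_add_cancel_of_le hle]
      · rw [if_neg h2, mul_zero]

lemma Bf_pderiv (i : Fin (2 * k + 1)) (p q : Rk k) :
    Bf (pderiv i p) q = Bf p (X i * q) := by
  induction q using MvPolynomial.induction_on' with
  | add q q' hq hq' => rw [Bf_add_right, mul_add, Bf_add_right, hq, hq']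
  | monomial v b =>
    have hX : (X i : Rk k) * monomial v b = monomial (v + Finsupp.single i 1) b := by
      rw [X, monomial_mul, one_mul, add_comm (Finsupp.single i 1) v]
    rw [hX, Bf_monomial_right, Bf_monomial_right, coeff_pderiv, facR_add_single]
    ring

lemma Bf_X_mul (i : Fin (2 * k + 1)) (u q : Rk k) :
    Bf (X i * u) q = Bf u (pderiv i q) := by
  rw [Bf_symm, ← Bf_pderiv, Bf_symm]

lemma two_eq_C : (2 : Rk k) = C 2 := by
  rw [map_ofNat]

/-! ### Adjoint operators -/

/-- Adjoint of X_j for the Fischer pairing: q ↦ x_j q + 2 t ∂_{y_j} q. -/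
def XstK (k : ℕ) (j : Fin k) : Rk k →ₗ[ℝ] Rk k :=
  (LinearMap.mulLeft ℝ (X (xI k j))) +
    (LinearMap.mulLeft ℝ ((2 : Rk k) * X (tI k))) ∘ₗ (pderiv (yI k j)).toLinearMap

/-- Adjoint of Y_j for the Fischer pairing: q ↦ y_j q − 2 t ∂_{x_j} q. -/
def YstK (k : ℕ) (j : Fin k) : Rk k →ₗ[ℝ] Rk k :=
  (LinearMap.mulLeft ℝ (X (yI k j))) -
    (LinearMap.mulLeft ℝ ((2 : Rk k) * X (tI k))) ∘ₗ (pderiv (xI k j)).toLinearMap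

/-- Adjoint of the sub-Laplacian. -/
def ΔstK (k : ℕ) : Rk k →ₗ[ℝ] Rk k :=
  ∑ j : Fin k, (XstK k j ∘ₗ XstK k j + YstK k j ∘ₗ YstK k j)

lemma XopK_apply (j : Fin k) (p : Rk k) :
    XopK k j p = pderiv (xI k j) p + ((2 : Rk k) * X (yI k j)) * pderiv (tI k) p := rfl

lemma YopK_apply (j : Fin k) (p : Rk k) :
    YopK k j p = pderiv (yI k j) p - ((2 : Rk k) * X (xI k j)) * pderiv (tI k) p := rfl

lemma XstK_apply (j : Fin k) (q : Rk k) :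
    XstK k j q = X (xI k j) * q + ((2 : Rk k) * X (tI k)) * pderiv (yI k j) q := rfl

lemma YstK_apply (j : Fin k) (q : Rk k) :
    YstK k j q = X (yI k j) * q - ((2 : Rk k) * X (tI k)) * pderiv (xI k j) q := rfl

lemma Bf_two_X_mul_left (i : Fin (2 * k + 1)) (u q : Rk k) :
    Bf (((2 : Rk k) * X i) * u) q = 2 * Bf (X i * u) q := by
  rw [two_eq_C, mul_assoc, Bf_C_mul_left]

lemma Bf_two_X_mul_right (i : Fin (2 * k + 1)) (u p : Rk k) :
    Bf p (((2 : Rk k) * X i) * u) = 2 * Bf p (X i * u) := by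
  rw [two_eq_C, mul_assoc, Bf_C_mul_right]

lemma Bf_Xop (j : Fin k) (p q : Rk k) : Bf (XopK k j p) q = Bf p (XstK k j q) := by
  rw [XopK_apply, XstK_apply, Bf_add_left, Bf_add_right, Bf_pderiv,
      Bf_two_X_mul_left, Bf_two_X_mul_right, Bf_X_mul, Bf_symm (pderiv (tI k) p),
      ← Bf_pderiv, Bf_symm (pderiv (yI k j) q), Bf_pderiv, Bf_pderiv (tI k) p]

lemma Bf_Yop (j : Fin k) (p q : Rk k) : Bf (YopK k j p) q = Bf p (YstK k j q) := by
  rw [YopK_apply, YstK_apply, Bf_sub_left, Bf_sub_right, Bf_pderiv,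
      Bf_two_X_mul_left, Bf_two_X_mul_right, Bf_X_mul, Bf_symm (pderiv (tI k) p),
      ← Bf_pderiv, Bf_symm (pderiv (xI k j) q), Bf_pderiv, Bf_pderiv (tI k) p]

lemma Bf_ΔHk (p q : Rk k) : Bf (ΔHk k p) q = Bf p (ΔstK k q) := by
  rw [ΔHk, ΔstK, LinearMap.sum_apply, LinearMap.sum_apply, Bf_sum_left, Bf_sum_right]
  refine Finset.sum_congr rfl fun j _ => ?_
  rw [LinearMap.add_apply, LinearMap.add_apply, Bf_add_left, Bf_add_right,
      LinearMap.comp_apply, LinearMap.comp_apply, LinearMap.comp_apply, LinearMap.comp_apply,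
      Bf_Xop, Bf_Xop, Bf_Yop, Bf_Yop]

/-! ### Homogeneity -/

lemma wk_pos (i : Fin (2 * k + 1)) : 1 ≤ wk k i := by
  unfold wk
  split <;> omega

lemma wk_xI (j : Fin k) : wk k (xI k j) = 1 := by
  have := j.isLt
  simp only [wk, xI]
  split_ifs <;> omega

lemma wk_yI (j : Fin k) : wk k (yI k j) = 1 := by
  have := j.isLt
  simp only [wk, yI]
  split_ifs <;> omega

lemma wk_tI : wk k (tI k) = 2 := by
  simp [wk, tI]

lemma PmK_congr {m m' : ℤ} (h : m = m') {p : Rk k} (hp : p ∈ PmK k m) : p ∈ PmK k m' :=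
  h ▸ hp

lemma weight_add_single (d : Fin (2 * k + 1) →₀ ℕ) (i : Fin (2 * k + 1)) :
    Finsupp.weight (wk k) (d + Finsupp.single i 1) = Finsupp.weight (wk k) d + wk k i := by
  rw [map_add]
  congr 1
  rw [Finsupp.weight_apply, Finsupp.sum_single_index]
  · rw [one_smul]
  · rw [zero_smul]

lemma mem_pderiv {p : Rk k} {m : ℤ} (i : Fin (2 * k + 1)) (hp : p ∈ PmK k m) :
    pderiv i p ∈ PmK k (m - wk k i) := by
  rw [PmK, mem_weightedHomogeneousSubmodule] at hp ⊢
  intro d hd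
  have h1 : coeff (d + Finsupp.single i 1) p ≠ 0 := by
    intro h
    rw [coeff_pderiv, h, mul_zero] at hd
    exact hd rfl
  have h2 := hp h1
  rw [weight_add_single] at h2
  omega

lemma mem_X_mul {p : Rk k} {m : ℤ} (i : Fin (2 * k + 1)) (hp : p ∈ PmK k m) :
    X i * p ∈ PmK k (wk k i + m) := by
  rw [PmK, mem_weightedHomogeneousSubmodule] at hp ⊢
  exact (isWeightedHomogeneous_X ℝ (wk k) i).mul hp

lemma mem_C_mul {p : Rk k} {m : ℤ} (c : ℝ) (hp : p ∈ PmK k m) :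
    C c * p ∈ PmK k m := by
  rw [PmK, mem_weightedHomogeneousSubmodule] at hp ⊢
  have := (isWeightedHomogeneous_C (wk k) c).mul hp
  rwa [zero_add] at this

lemma mem_two_X_mul {p : Rk k} {m : ℤ} (i : Fin (2 * k + 1)) (hp : p ∈ PmK k m) :
    ((2 : Rk k) * X i) * p ∈ PmK k (wk k i + m) := by
  rw [two_eq_C, mul_assoc]
  exact mem_C_mul 2 (mem_X_mul i hp)

lemma mem_Xop {p : Rk k} {m : ℤ} (j : Fin k) (hp : p ∈ PmK k m) :
    XopK k j p ∈ PmK k (m - 1) := by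
  rw [XopK_apply]
  refine Submodule.add_mem _ ?_ ?_
  · exact PmK_congr (by rw [wk_xI]) (mem_pderiv (xI k j) hp)
  · refine PmK_congr ?_ (mem_two_X_mul (yI k j) (mem_pderiv (tI k) hp))
    rw [wk_yI, wk_tI]
    ring

lemma mem_Yop {p : Rk k} {m : ℤ} (j : Fin k) (hp : p ∈ PmK k m) :
    YopK k j p ∈ PmK k (m - 1) := by
  rw [YopK_apply]
  refine Submodule.sub_mem _ ?_ ?_
  · exact PmK_congr (by rw [wk_yI]) (mem_pderiv (yI k j) hp)
  · refine PmK_congr ?_ (mem_two_X_mul (xI k j) (mem_pderiv (tI k) hp))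
    rw [wk_xI, wk_tI]
    ring

lemma mem_ΔHk {p : Rk k} {m : ℤ} (hp : p ∈ PmK k m) : ΔHk k p ∈ PmK k (m - 2) := by
  rw [ΔHk, LinearMap.sum_apply]
  refine Submodule.sum_mem _ fun j _ => ?_
  rw [LinearMap.add_apply, LinearMap.comp_apply, LinearMap.comp_apply]
  refine Submodule.add_mem _ ?_ ?_
  · exact PmK_congr (by ring) (mem_Xop j (mem_Xop j hp))
  · exact PmK_congr (by ring) (mem_Yop j (mem_Yop j hp))

lemma mem_Xst {q : Rk k} {n : ℤ} (j : Fin k) (hq : q ∈ PmK k n) :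
    XstK k j q ∈ PmK k (n + 1) := by
  rw [XstK_apply]
  refine Submodule.add_mem _ ?_ ?_
  · exact PmK_congr (by rw [wk_xI]; ring) (mem_X_mul (xI k j) hq)
  · refine PmK_congr ?_ (mem_two_X_mul (tI k) (mem_pderiv (yI k j) hq))
    rw [wk_yI, wk_tI]
    ring

lemma mem_Yst {q : Rk k} {n : ℤ} (j : Fin k) (hq : q ∈ PmK k n) :
    YstK k j q ∈ PmK k (n + 1) := by
  rw [YstK_apply]
  refine Submodule.sub_mem _ ?_ ?_
  · exact PmK_congr (by rw [wk_yI]; ring) (mem_X_mul (yI k j) hq)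
  · refine PmK_congr ?_ (mem_two_X_mul (tI k) (mem_pderiv (xI k j) hq))
    rw [wk_xI, wk_tI]
    ring

lemma mem_Δst {q : Rk k} {n : ℤ} (hq : q ∈ PmK k n) : ΔstK k q ∈ PmK k (n + 2) := by
  rw [ΔstK, LinearMap.sum_apply]
  refine Submodule.sum_mem _ fun j _ => ?_
  rw [LinearMap.add_apply, LinearMap.comp_apply, LinearMap.comp_apply]
  refine Submodule.add_mem _ ?_ ?_
  · exact PmK_congr (by ring) (mem_Xst j (mem_Xst j hq))
  · exact PmK_congr (by ring) (mem_Yst j (mem_Yst j hq))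

/-! ### Injectivity of the adjoint sub-Laplacian -/

/-- Evaluation t ↦ 0. -/
def phiK (k : ℕ) : Rk k →ₐ[ℝ] Rk k :=
  aeval (fun i => if i = tI k then 0 else X i)

lemma xI_ne_tI (j : Fin k) : xI k j ≠ tI k := by
  have := j.isLt
  intro h
  have := congrArg Fin.val h
  simp only [xI, tI] at this
  omega

lemma yI_ne_tI (j : Fin k) : yI k j ≠ tI k := by
  have := j.isLt
  intro h
  have := congrArg Fin.val h
  simp only [yI, tI] at this
  omega

lemma phiK_X_ne {i : Fin (2 * k + 1)} (h : i ≠ tI k) : phiK k (X i) = X i := by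
  rw [phiK, aeval_X, if_neg h]

lemma phiK_X_tI : phiK k (X (tI k)) = 0 := by
  rw [phiK, aeval_X, if_pos rfl]

lemma phiK_monomial (u : Fin (2 * k + 1) →₀ ℕ) (a : ℝ) :
    phiK k (monomial u a) = if u (tI k) = 0 then monomial u a else 0 := by
  rw [phiK, aeval_monomial]
  by_cases h : u (tI k) = 0
  · rw [if_pos h]
    have hprod : (u.prod fun i n => (if i = tI k then (0 : Rk k) else X i) ^ n)
        = u.prod fun i n => (X i) ^ n := by
      apply Finsupp.prod_congr
      intro i hi
      have : i ≠ tI k := by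
        intro he
        subst he
        exact Finsupp.mem_support_iff.mp hi h
      rw [if_neg this]
    rw [hprod, monomial_eq]
    rfl
  · rw [if_neg h]
    have htI : tI k ∈ u.support := Finsupp.mem_support_iff.mpr h
    have : (u.prod fun i n => (if i = tI k then (0 : Rk k) else X i) ^ n) = 0 := by
      rw [Finsupp.prod]
      apply Finset.prod_eq_zero htI
      rw [if_pos rfl, zero_pow h]
    rw [this, mul_zero]

lemma coeff_phiK {d : Fin (2 * k + 1) →₀ ℕ} (hd : d (tI k) = 0) (q : Rk k) :
    coeff d (phiK k q) = coeff d q := by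
  induction q using MvPolynomial.induction_on' with
  | add q q' hq hq' => rw [map_add, coeff_add, coeff_add, hq, hq']
  | monomial u a =>
    rw [phiK_monomial]
    by_cases h : u (tI k) = 0
    · rw [if_pos h]
    · rw [if_neg h, coeff_zero, coeff_monomial, if_neg]
      intro he
      subst he
      exact h hd

lemma phiK_Xst (j : Fin k) (r : Rk k) :
    phiK k (XstK k j r) = X (xI k j) * phiK k r := by
  rw [XstK_apply, map_add, map_mul, map_mul, phiK_X_ne (xI_ne_tI j)]
  have h2 : phiK k ((2 : Rk k) * X (tI k)) = 0 := by
    rw [map_mul, phiK_X_tI, mul_zero]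
  rw [h2, zero_mul, add_zero]

lemma phiK_Yst (j : Fin k) (r : Rk k) :
    phiK k (YstK k j r) = X (yI k j) * phiK k r := by
  rw [YstK_apply, map_sub, map_mul, map_mul, phiK_X_ne (yI_ne_tI j)]
  have h2 : phiK k ((2 : Rk k) * X (tI k)) = 0 := by
    rw [map_mul, phiK_X_tI, mul_zero]
  rw [h2, zero_mul, sub_zero]

/-- The polynomial |x|² + |y|². -/
def Szk (k : ℕ) : Rk k :=
  ∑ j : Fin k, (X (xI k j) * X (xI k j) + X (yI k j) * X (yI k j))

lemma Szk_ne_zero (hk : 1 ≤ k) : Szk k ≠ 0 := by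
  intro h
  have h2 := congrArg (eval (fun _ => (1 : ℝ))) h
  rw [Szk, map_zero] at h2
  rw [map_sum] at h2
  simp only [map_add, map_mul, eval_X, mul_one] at h2
  rw [Finset.sum_const, Finset.card_univ, Fintype.card_fin] at h2
  norm_num at h2
  omega

lemma phiK_Δst (q : Rk k) : phiK k (ΔstK k q) = Szk k * phiK k q := by
  rw [ΔstK, LinearMap.sum_apply, map_sum, Szk, Finset.sum_mul]
  refine Finset.sum_congr rfl fun j _ => ?_
  rw [LinearMap.add_apply, LinearMap.comp_apply, LinearMap.comp_apply, map_add,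
      phiK_Xst, phiK_Xst, phiK_Yst, phiK_Yst, add_mul]
  ring

lemma Xst_t_mul (j : Fin k) (r : Rk k) :
    XstK k j (X (tI k) * r) = X (tI k) * XstK k j r := by
  have hd : pderiv (yI k j) (X (tI k) * r) = X (tI k) * pderiv (yI k j) r := by
    rw [pderiv_mul, pderiv_X_of_ne (Ne.symm (yI_ne_tI j)), zero_mul, zero_add]
  rw [XstK_apply, XstK_apply, hd]
  ring

lemma Yst_t_mul (j : Fin k) (r : Rk k) :
    YstK k j (X (tI k) * r) = X (tI k) * YstK k j r := by
  have hd : pderiv (xI k j) (X (tI k) * r) = X (tI k) * pderiv (xI k j) r := by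
    rw [pderiv_mul, pderiv_X_of_ne (Ne.symm (xI_ne_tI j)), zero_mul, zero_add]
  rw [YstK_apply, YstK_apply, hd]
  ring

lemma Δst_t_mul (q : Rk k) : ΔstK k (X (tI k) * q) = X (tI k) * ΔstK k q := by
  rw [ΔstK, LinearMap.sum_apply, LinearMap.sum_apply, Finset.mul_sum]
  refine Finset.sum_congr rfl fun j _ => ?_
  rw [LinearMap.add_apply, LinearMap.add_apply, LinearMap.comp_apply, LinearMap.comp_apply,
      LinearMap.comp_apply, LinearMap.comp_apply, Xst_t_mul, Xst_t_mul, Yst_t_mul, Yst_t_mul,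
      mul_add]

lemma t_dvd_of (hk : 1 ≤ k) (q : Rk k) (h0 : ΔstK k q = 0) (hne : q ≠ 0) :
    ∃ q', q = X (tI k) * q' ∧ q' ≠ 0 := by
  have hphi : Szk k * phiK k q = 0 := by rw [← phiK_Δst, h0, map_zero]
  have hphi0 : phiK k q = 0 := by
    rcases mul_eq_zero.mp hphi with h | h
    · exact absurd h (Szk_ne_zero hk)
    · exact h
  have hco : ∀ d : Fin (2 * k + 1) →₀ ℕ, d (tI k) = 0 → coeff d q = 0 := by
    intro d hd
    rw [← coeff_phiK hd, hphi0, coeff_zero]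
  have hmod : MvPolynomial.modMonomial q (Finsupp.single (tI k) 1) = 0 := by
    apply MvPolynomial.ext
    intro d
    rw [coeff_zero]
    by_cases hle : Finsupp.single (tI k) 1 ≤ d
    · rw [coeff_modMonomial_of_le _ hle]
    · rw [coeff_modMonomial_of_not_le _ hle]
      apply hco
      rw [Finsupp.single_le_iff] at hle
      omega
  refine ⟨MvPolynomial.divMonomial q (Finsupp.single (tI k) 1), ?_, ?_⟩
  · have h3 := MvPolynomial.divMonomial_add_modMonomial q (Finsupp.single (tI k) 1)
    rw [hmod, add_zero] at h3
    have hX : (X (tI k) : Rk k) = monomial (Finsupp.single (tI k) 1) 1 := rfl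
    rw [hX]
    exact h3.symm
  · intro h
    apply hne
    have h3 := MvPolynomial.divMonomial_add_modMonomial q (Finsupp.single (tI k) 1)
    rw [hmod, add_zero, h] at h3
    rw [← h3, mul_zero]

lemma Δst_inj (hk : 1 ≤ k) (q : Rk k) (hq : ΔstK k q = 0) : q = 0 := by
  suffices H : ∀ n (q : Rk k), degreeOf (tI k) q ≤ n → ΔstK k q = 0 → q = 0 from
    H (degreeOf (tI k) q) q le_rfl hq
  intro n
  induction n with
  | zero =>
    intro q hdeg h0
    by_contra hne
    obtain ⟨q', hq', hne'⟩ := t_dvd_of hk q h0 hne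
    have hd := (degreeOf_mul_X_eq_degreeOf_add_one_iff (tI k) q').mpr hne'
    rw [mul_comm] at hq'
    rw [← hq'] at hd
    omega
  | succ n ih =>
    intro q hdeg h0
    by_contra hne
    obtain ⟨q', hq', hne'⟩ := t_dvd_of hk q h0 hne
    have hdeg' := (degreeOf_mul_X_eq_degreeOf_add_one_iff (tI k) q').mpr hne'
    rw [mul_comm] at hq'
    rw [← hq'] at hdeg'
    have h1 : ΔstK k q' = 0 := by
      have : X (tI k) * ΔstK k q' = 0 := by
        rw [← Δst_t_mul, mul_comm (X (tI k)) q', ← hq', h0]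
      rcases mul_eq_zero.mp this with h | h
      · exact absurd h (X_ne_zero _)
      · exact h
    exact hne' (ih q' (by omega) h1)

/-! ### Finite dimensionality -/

instance PmK_fd (m : ℤ) : FiniteDimensional ℝ (PmK k m) := by
  apply Submodule.finiteDimensional_of_le
    (S₂ := restrictTotalDegree (Fin (2 * k + 1)) ℝ m.toNat)
  intro p hp
  rw [mem_restrictTotalDegree]
  rw [PmK, mem_weightedHomogeneousSubmodule] at hp
  rw [totalDegree]
  apply Finset.sup_le
  intro d hd
  have hw := hp (mem_support_iff.mp hd)
  have key : ((d.sum fun _ e => e : ℕ) : ℤ) ≤ Finsupp.weight (wk k) d := by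
    rw [Finsupp.weight_apply, Finsupp.sum, Finsupp.sum, Nat.cast_sum]
    apply Finset.sum_le_sum
    intro i _
    have h1 := wk_pos (k := k) i
    have h2 : (d i : ℤ) * 1 ≤ (d i : ℤ) * wk k i :=
      mul_le_mul_of_nonneg_left h1 (by positivity)
    rw [nsmul_eq_mul]
    calc (d i : ℤ) = (d i : ℤ) * 1 := by ring
    _ ≤ (d i : ℤ) * wk k i := h2
  rw [hw] at key
  omega

end Stmt5Aux

open Stmt5Aux

/-- for `m ≥ 2`, `Δ_{H_k}` maps `P_m(ℍ_k)` into `P_{m−2}(ℍ_k)` and the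
restricted map is surjective; consequently
`dim H_m(ℍ_k) = dim P_m(ℍ_k) − dim P_{m−2}(ℍ_k)`. -/
theorem stmt5 (k : ℕ) (hk : 1 ≤ k) (m : ℕ) (hm : 2 ≤ m) :
    (∀ p ∈ PmK k (m : ℤ), ΔHk k p ∈ PmK k ((m : ℤ) - 2)) ∧
    (∀ q ∈ PmK k ((m : ℤ) - 2), ∃ p ∈ PmK k (m : ℤ), ΔHk k p = q) ∧
    Module.finrank ℝ (HmK k (m : ℤ)) =
      Module.finrank ℝ (PmK k (m : ℤ)) - Module.finrank ℝ (PmK k ((m : ℤ) - 2)) := by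
  have hmap : ∀ p ∈ PmK k (m : ℤ), ΔHk k p ∈ PmK k ((m : ℤ) - 2) := fun p hp => mem_ΔHk hp
  have hmapst : ∀ q ∈ PmK k ((m : ℤ) - 2), ΔstK k q ∈ PmK k (m : ℤ) := fun q hq =>
    PmK_congr (by ring) (mem_Δst hq)
  set f : PmK k (m : ℤ) →ₗ[ℝ] PmK k ((m : ℤ) - 2) := (ΔHk k).restrict hmap with hf
  set g : PmK k ((m : ℤ) - 2) →ₗ[ℝ] PmK k (m : ℤ) := (ΔstK k).restrict hmapst with hg
  have hinj : Function.Injective (f ∘ₗ g) := by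
    rw [← LinearMap.ker_eq_bot]
    apply (Submodule.eq_bot_iff _).mpr
    intro a ha
    rw [LinearMap.mem_ker] at ha
    have h1 : ΔHk k (ΔstK k (a : Rk k)) = 0 := by
      have := congrArg (Subtype.val) ha
      rwa [LinearMap.comp_apply, LinearMap.restrict_coe_apply, LinearMap.restrict_coe_apply]
        at this
    have h2 : Bf (k := k) (ΔstK k (a : Rk k)) (ΔstK k (a : Rk k)) = 0 := by
      rw [← Bf_ΔHk, h1, Bf_zero_left]
    have h4 : (a : Rk k) = 0 := Δst_inj hk _ (Bf_self_eq_zero h2)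
    exact ZeroMemClass.coe_eq_zero.mp h4
  have hsurjT : Function.Surjective (f ∘ₗ g) := LinearMap.injective_iff_surjective.mp hinj
  have hsurjf : Function.Surjective f := by
    intro b
    obtain ⟨a, ha⟩ := hsurjT b
    exact ⟨g a, ha⟩
  refine ⟨hmap, ?_, ?_⟩
  · intro q hq
    obtain ⟨a, ha⟩ := hsurjf ⟨q, hq⟩
    refine ⟨(a : Rk k), a.2, ?_⟩
    have := congrArg (Subtype.val) ha
    rwa [LinearMap.restrict_coe_apply] at this
  · have h5 := LinearMap.finrank_range_add_finrank_ker f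
    have hr : LinearMap.range f = ⊤ := LinearMap.range_eq_top.mpr hsurjf
    rw [hr, finrank_top] at h5
    have hker : Submodule.map (PmK k (m : ℤ)).subtype (LinearMap.ker f) = HmK k (m : ℤ) := by
      ext x
      rw [Submodule.mem_map]
      constructor
      · rintro ⟨y, hy, rfl⟩
        rw [LinearMap.mem_ker] at hy
        refine ⟨y.2, ?_⟩
        rw [SetLike.mem_coe, LinearMap.mem_ker]
        have := congrArg (Subtype.val) hy
        rwa [LinearMap.restrict_coe_apply] at this
      · rintro ⟨hx1, hx2⟩
        rw [SetLike.mem_coe, LinearMap.mem_ker] at hx2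
        refine ⟨⟨x, hx1⟩, ?_, rfl⟩
        rw [LinearMap.mem_ker]
        apply Subtype.ext
        rw [LinearMap.restrict_coe_apply]
        exact hx2
    have h6 : Module.finrank ℝ (HmK k (m : ℤ)) = Module.finrank ℝ (LinearMap.ker f) := by
      rw [← hker, Submodule.finrank_map_subtype_eq]
    rw [h6]
    omega

end
end
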